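/- Cost equivalence for controlled-predictor policies: for every finite horizon N ≥ 1, every initial pmf π_0 and every controlled-predictor policy, the expected accumulated cost satisfies E[Σ_{k=0}^{N-1} c(x_k, u_k)] = E[Σ_{k=0}^{N-1} c̃(π_k, Q_k, η_k)], where u_k = η_k(Q_k, q_k), the expectations are with respect to the trajectory law, π_k is the recursively defined predictor, and c̃(π,Q,η) := Σ_{x∈𝕏} π(x) c(x, η(Q, Q(x))). -/

import Mathlib

open Finset

noncomputable section

variable {X U M : Type}

/-- `π` is a probability mass function on the finite set `X`. -/
def IsPmf [Fintype X] (π : X → ℝ) : Prop :=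
  (∀ x, 0 ≤ π x) ∧ ∑ x, π x = 1

/-- Mass that `π` assigns to the cell `Q⁻¹(q)`. -/
def mass [Fintype X] [DecidableEq M] (π : X → ℝ) (Q : X → M) (q : M) : ℝ :=
  ∑ x ∈ Finset.univ.filter (fun x => Q x = q), π x

/-- One-step predictor (Bayesian) update `F(π,Q,η,q)`. -/
def Fupd [Fintype X] [DecidableEq M] (P : X → U → X → ℝ)
    (π : X → ℝ) (Q : X → M) (η : (X → M) → M → U) (q : M) : X → ℝ :=
  fun x' => (mass π Q q)⁻¹ *
    ∑ x ∈ Finset.univ.filter (fun x => Q x = q), P x (η Q q) x' * π x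

/-- Predictor process along a (chronological) list of channel outputs,
under the controlled-predictor policy `(γe, γc)`. -/
def predSeq [Fintype X] [DecidableEq M] (P : X → U → X → ℝ)
    (γe : (X → ℝ) → (X → M)) (γc : (X → ℝ) → ((X → M) → M → U)) :
    (X → ℝ) → List M → (X → ℝ)
  | π, [] => π
  | π, q :: qs => predSeq P γe γc (Fupd P π (γe π) (γc π) q) qs

/-- The predictor `π_s` given output history `qs` (only the first `s` outputs are used). -/
def predAt [Fintype X] [DecidableEq M] (P : X → U → X → ℝ)
    (γe : (X → ℝ) → (X → M)) (γc : (X → ℝ) → ((X → M) → M → U))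
    (π0 : X → ℝ) {n : ℕ} (qs : Fin n → M) (s : ℕ) : X → ℝ :=
  predSeq P γe γc π0 ((List.ofFn qs).take s)

/-- Trajectory law of `(x_{[0,n-1]}, q_{[0,n-1]})` under the controlled-predictor
policy `(γe, γc)` with initial pmf `π0`:
`π0(x_0) ∏_s 1{q_s = Q_s(x_s)} ∏_s P(x_{s+1} | x_s, η_s(Q_s, q_s))`. -/
def law [Fintype X] [Fintype M] [DecidableEq M] (P : X → U → X → ℝ)
    (γe : (X → ℝ) → (X → M)) (γc : (X → ℝ) → ((X → M) → M → U))
    (π0 : X → ℝ) (n : ℕ) (xs : Fin n → X) (qs : Fin n → M) : ℝ :=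
  ∏ s : Fin n,
    ((if (s : ℕ) = 0 then π0 (xs s)
      else
        P (xs ⟨(s : ℕ) - 1, lt_of_le_of_lt (Nat.sub_le _ _) s.isLt⟩)
          (γc (predAt P γe γc π0 qs ((s : ℕ) - 1))
            (γe (predAt P γe γc π0 qs ((s : ℕ) - 1)))
            (qs ⟨(s : ℕ) - 1, lt_of_le_of_lt (Nat.sub_le _ _) s.isLt⟩))
          (xs s))
      * (if qs s = γe (predAt P γe γc π0 qs (s : ℕ)) (xs s) then 1 else 0))

/-- Probability of the output history `qs` under the trajectory law. -/
def outProb [Fintype X] [Fintype M] [DecidableEq M] (P : X → U → X → ℝ)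
    (γe : (X → ℝ) → (X → M)) (γc : (X → ℝ) → ((X → M) → M → U))
    (π0 : X → ℝ) (n : ℕ) (qs : Fin n → M) : ℝ :=
  ∑ xs : Fin n → X, law P γe γc π0 n xs qs

/-- The equivalent per-stage cost `c̃(π,Q,η) := Σ_x π(x) c(x, η(Q, Q(x)))`. -/
def ctilde [Fintype X] (c : X → U → ℝ) (π : X → ℝ) (Q : X → M)
    (η : (X → M) → M → U) : ℝ :=
  ∑ x, π x * c x (η Q (Q x))

section Aux

variable [Fintype X] [Fintype M] [DecidableEq M] [DecidableEq X]

lemma predSeq_append (P : X → U → X → ℝ) (γe : (X → ℝ) → (X → M))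
    (γc : (X → ℝ) → ((X → M) → M → U)) (π : X → ℝ) (l₁ l₂ : List M) :
    predSeq P γe γc π (l₁ ++ l₂) = predSeq P γe γc (predSeq P γe γc π l₁) l₂ := by
  induction l₁ generalizing π with
  | nil => rfl
  | cons q l ih => simp only [List.cons_append, predSeq, ih, List.append_eq]

lemma predAt_snoc (P : X → U → X → ℝ) (γe : (X → ℝ) → (X → M))
    (γc : (X → ℝ) → ((X → M) → M → U)) (π0 : X → ℝ) {n : ℕ}
    (qs : Fin n → M) (q : M) {s : ℕ} (hs : s ≤ n) :
    predAt P γe γc π0 (Fin.snoc qs q) s = predAt P γe γc π0 qs s := by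
  unfold predAt
  rw [List.ofFn_succ' (Fin.snoc qs q)]
  simp only [Fin.snoc_castSucc, Fin.snoc_last, List.concat_eq_append]
  rw [List.take_append_of_le_length (by simpa using hs)]

lemma predAt_snoc_succ (P : X → U → X → ℝ) (γe : (X → ℝ) → (X → M))
    (γc : (X → ℝ) → ((X → M) → M → U)) (π0 : X → ℝ) {n : ℕ}
    (qs : Fin n → M) (q : M) :
    predAt P γe γc π0 (Fin.snoc qs q) (n + 1) =
      Fupd P (predAt P γe γc π0 qs n) (γe (predAt P γe γc π0 qs n))
        (γc (predAt P γe γc π0 qs n)) q := by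
  unfold predAt
  rw [List.ofFn_succ' (Fin.snoc qs q)]
  simp only [Fin.snoc_castSucc, Fin.snoc_last, List.concat_eq_append]
  rw [List.take_of_length_le (by simp), predSeq_append,
    List.take_of_length_le (by simp)]
  rfl

lemma Fupd_nonneg {P : X → U → X → ℝ} (hP : ∀ x u x', 0 ≤ P x u x') {π : X → ℝ}
    (hπ : ∀ x, 0 ≤ π x) (Q : X → M) (η : (X → M) → M → U) (q : M) (x : X) :
    0 ≤ Fupd P π Q η q x := by
  refine mul_nonneg (inv_nonneg.2 (Finset.sum_nonneg fun _ _ => hπ _)) ?_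
  exact Finset.sum_nonneg fun y _ => mul_nonneg (hP _ _ _) (hπ _)

lemma predSeq_nonneg {P : X → U → X → ℝ} (hP : ∀ x u x', 0 ≤ P x u x')
    (γe : (X → ℝ) → (X → M)) (γc : (X → ℝ) → ((X → M) → M → U)) {π : X → ℝ}
    (hπ : ∀ x, 0 ≤ π x) (l : List M) : ∀ x, 0 ≤ predSeq P γe γc π l x := by
  induction l generalizing π with
  | nil => exact hπ
  | cons q l ih => exact ih (Fupd_nonneg hP hπ _ _ _)

lemma predAt_nonneg {P : X → U → X → ℝ} (hP : ∀ x u x', 0 ≤ P x u x')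
    (γe : (X → ℝ) → (X → M)) (γc : (X → ℝ) → ((X → M) → M → U)) {π0 : X → ℝ}
    (hπ0 : ∀ x, 0 ≤ π0 x) {n : ℕ} (qs : Fin n → M) (s : ℕ) :
    ∀ x, 0 ≤ predAt P γe γc π0 qs s x :=
  predSeq_nonneg hP γe γc hπ0 _

lemma mass_mul_Fupd (P : X → U → X → ℝ) {π : X → ℝ} (hπ : ∀ x, 0 ≤ π x)
    (Q : X → M) (η : (X → M) → M → U) (q : M) (x' : X) :
    mass π Q q * Fupd P π Q η q x' =
      ∑ x ∈ Finset.univ.filter (fun x => Q x = q), π x * P x (η Q q) x' := by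
  unfold Fupd
  by_cases h : mass π Q q = 0
  · rw [h, zero_mul]
    symm
    refine Finset.sum_eq_zero fun x hx => ?_
    have h0 : π x = 0 :=
      (Finset.sum_eq_zero_iff_of_nonneg fun y _ => hπ y).1 h x hx
    rw [h0, zero_mul]
  · rw [← mul_assoc, mul_inv_cancel₀ h, one_mul]
    exact Finset.sum_congr rfl fun x _ => mul_comm _ _

/-- Helper: evaluating `Fin.snoc` at an index `⟨v, _⟩` with `v < n`. -/
lemma snoc_mk {α : Type} {n : ℕ} (p : Fin n → α) (x : α) (v : ℕ) (hv : v < n)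
    (h : v < n + 1) : Fin.snoc (α := fun _ => α) p x ⟨v, h⟩ = p ⟨v, hv⟩ := by
  have : (⟨v, h⟩ : Fin (n + 1)) = Fin.castSucc ⟨v, hv⟩ := rfl
  rw [this, Fin.snoc_castSucc]

/-- The "last-step" kernel factor. -/
def stepF (P : X → U → X → ℝ) (γe : (X → ℝ) → (X → M))
    (γc : (X → ℝ) → ((X → M) → M → U)) (π0 : X → ℝ) {n : ℕ}
    (xs : Fin n → X) (qs : Fin n → M) (x : X) : ℝ :=
  if h : n = 0 then π0 x
  else
    P (xs ⟨n - 1, by omega⟩)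
      (γc (predAt P γe γc π0 qs (n - 1)) (γe (predAt P γe γc π0 qs (n - 1)))
        (qs ⟨n - 1, by omega⟩)) x

lemma stepF_sum {P : X → U → X → ℝ} (hP : ∀ x u, IsPmf (P x u)) {π0 : X → ℝ}
    (hπ0 : IsPmf π0) (γe : (X → ℝ) → (X → M)) (γc : (X → ℝ) → ((X → M) → M → U))
    {n : ℕ} (xs : Fin n → X) (qs : Fin n → M) :
    ∑ x, stepF P γe γc π0 xs qs x = 1 := by
  unfold stepF
  by_cases h : n = 0
  · simp only [dif_pos h]; exact hπ0.2
  · simp only [dif_neg h]; exact (hP _ _).2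

/-- `law` at horizon `n+1` factorizes over `Fin.snoc`. -/
lemma law_snoc (P : X → U → X → ℝ) (γe : (X → ℝ) → (X → M))
    (γc : (X → ℝ) → ((X → M) → M → U)) (π0 : X → ℝ) {n : ℕ}
    (xs : Fin n → X) (qs : Fin n → M) (x : X) (q : M) :
    law P γe γc π0 (n + 1) (Fin.snoc xs x) (Fin.snoc qs q) =
      law P γe γc π0 n xs qs *
        (stepF P γe γc π0 xs qs x *
          (if q = γe (predAt P γe γc π0 qs n) x then 1 else 0)) := by
  unfold law
  rw [Fin.prod_univ_castSucc]
  congr 1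
  · refine Finset.prod_congr rfl fun s _ => ?_
    simp only [Fin.coe_castSucc, Fin.snoc_castSucc]
    rw [predAt_snoc P γe γc π0 qs q (le_of_lt s.isLt),
      predAt_snoc P γe γc π0 qs q (show (s : ℕ) - 1 ≤ n by omega)]
    by_cases h0 : (s : ℕ) = 0
    · simp [h0]
    · rw [if_neg h0, if_neg h0,
        snoc_mk xs x _ (by omega) _, snoc_mk qs q _ (by omega) _]
  · simp only [Fin.val_last, Fin.snoc_last]
    rw [predAt_snoc P γe γc π0 qs q le_rfl]
    unfold stepF
    by_cases h : n = 0
    · subst h; simp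
    · rw [if_neg h, dif_neg h,
        predAt_snoc P γe γc π0 qs q (show n - 1 ≤ n by omega),
        snoc_mk xs x _ (by omega) _, snoc_mk qs q _ (by omega) _]

lemma sum_snoc {α : Type} [Fintype α] [DecidableEq α] (n : ℕ)
    (f : (Fin (n + 1) → α) → ℝ) :
    ∑ g : Fin (n + 1) → α, f g = ∑ x : α, ∑ xs : Fin n → α, f (Fin.snoc xs x) := by
  rw [← Equiv.sum_comp (Fin.snocEquiv fun _ => α) f, Fintype.sum_prod_type]
  exact Finset.sum_congr rfl fun x _ => Finset.sum_congr rfl fun xs _ => rfl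

/-- Joint density of `(q_{[0,n-1]}, x_n)` (at horizon `n = 0` this is just `π0`). -/
def jointNext (P : X → U → X → ℝ) (γe : (X → ℝ) → (X → M))
    (γc : (X → ℝ) → ((X → M) → M → U)) (π0 : X → ℝ) (n : ℕ)
    (qs : Fin n → M) (x : X) : ℝ :=
  ∑ xs : Fin n → X, law P γe γc π0 n xs qs * stepF P γe γc π0 xs qs x

lemma sum_ind_filter (Q : X → M) (q : M) (f : X → ℝ) :
    ∑ x, (if q = Q x then 1 else 0) * f x =
      ∑ x ∈ Finset.univ.filter (fun x => Q x = q), f x := by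
  rw [Finset.sum_filter]
  refine Finset.sum_congr rfl fun x _ => ?_
  by_cases h : Q x = q
  · simp [h]
  · rw [if_neg (fun hq => h hq.symm), if_neg h, zero_mul]

lemma sum_ind_one (v : M) : ∑ q : M, (if q = v then (1:ℝ) else 0) = 1 := by
  simp

/-- The fundamental filtering identity:
the joint density of `(q_{[0,n-1]}, x_n)` equals `outProb · predAt`. -/
lemma jointNext_eq {P : X → U → X → ℝ} (hP : ∀ x u, IsPmf (P x u))
    (γe : (X → ℝ) → (X → M)) (γc : (X → ℝ) → ((X → M) → M → U))
    {π0 : X → ℝ} (hπ0 : IsPmf π0) :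
    ∀ (n : ℕ) (qs : Fin n → M) (x : X),
      jointNext P γe γc π0 n qs x =
        outProb P γe γc π0 n qs * predAt P γe γc π0 qs n x := by
  have hPnn : ∀ x u x', 0 ≤ P x u x' := fun x u => (hP x u).1
  intro n
  induction n with
  | zero =>
      intro qs x
      simp [jointNext, outProb, law, stepF, predAt, predSeq]
  | succ n ih =>
      intro qs' x'
      induction qs' using Fin.snocCases with
      | snoc qs q =>
        set πn := predAt P γe γc π0 qs n with hπn
        have hπnn : ∀ x, 0 ≤ πn x :=
          predAt_nonneg hPnn γe γc hπ0.1 qs n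
        have hstep : ∀ (xs : Fin n → X) (x : X),
            stepF P γe γc π0 (n := n + 1) (Fin.snoc xs x) (Fin.snoc qs q) x' =
              P x (γc πn (γe πn) q) x' := by
          intro xs x
          unfold stepF
          rw [dif_neg (Nat.succ_ne_zero n)]
          simp only [Nat.add_sub_cancel]
          rw [predAt_snoc P γe γc π0 qs q le_rfl,
            show (⟨n, by omega⟩ : Fin (n + 1)) = Fin.last n from rfl,
            Fin.snoc_last, Fin.snoc_last]
        have hJ : ∀ x : X,
            (∑ xs : Fin n → X,
              law P γe γc π0 (n + 1) (Fin.snoc xs x) (Fin.snoc qs q) *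
                stepF P γe γc π0 (Fin.snoc xs x) (Fin.snoc qs q) x') =
            jointNext P γe γc π0 n qs x *
              ((if q = γe πn x then 1 else 0) * P x (γc πn (γe πn) q) x') := by
          intro x
          rw [jointNext, Finset.sum_mul]
          refine Finset.sum_congr rfl fun xs _ => ?_
          rw [law_snoc, hstep]
          ring
        have houtP : outProb P γe γc π0 (n + 1) (Fin.snoc qs q) =
            outProb P γe γc π0 n qs * mass πn (γe πn) q := by
          rw [outProb, sum_snoc]
          have : ∀ x : X,
              (∑ xs : Fin n → X,
                law P γe γc π0 (n + 1) (Fin.snoc xs x) (Fin.snoc qs q)) =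
              (if q = γe πn x then 1 else 0) * jointNext P γe γc π0 n qs x := by
            intro x
            rw [jointNext, Finset.mul_sum]
            refine Finset.sum_congr rfl fun xs _ => ?_
            rw [law_snoc]
            ring
          rw [Finset.sum_congr rfl fun x _ => this x,
            sum_ind_filter (γe πn) q]
          unfold mass
          rw [Finset.mul_sum]
          exact Finset.sum_congr rfl fun x hx => ih qs x
        rw [jointNext, sum_snoc, Finset.sum_congr rfl fun x _ => hJ x]
        have : ∀ x : X, jointNext P γe γc π0 n qs x *
              ((if q = γe πn x then 1 else 0) * P x (γc πn (γe πn) q) x') =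
            (if q = γe πn x then 1 else 0) *
              (outProb P γe γc π0 n qs * (πn x * P x (γc πn (γe πn) q) x')) := by
          intro x
          rw [ih qs x]
          ring
        rw [Finset.sum_congr rfl fun x _ => this x, sum_ind_filter, ← Finset.mul_sum,
          houtP, predAt_snoc_succ, mul_assoc,
          mass_mul_Fupd P hπnn (γe πn) (γc πn) q x']

lemma sum_ind_eval (v : M) (f : M → ℝ) :
    ∑ q : M, (if q = v then (1:ℝ) else 0) * f q = f v := by
  simp [ite_mul]

lemma outProb_snoc (P : X → U → X → ℝ) (γe : (X → ℝ) → (X → M))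
    (γc : (X → ℝ) → ((X → M) → M → U)) (π0 : X → ℝ) {n : ℕ}
    (qs : Fin n → M) (q : M) :
    outProb P γe γc π0 (n + 1) (Fin.snoc qs q) =
      ∑ x, (if q = γe (predAt P γe γc π0 qs n) x then 1 else 0) *
        jointNext P γe γc π0 n qs x := by
  rw [outProb, sum_snoc]
  refine Finset.sum_congr rfl fun x _ => ?_
  rw [jointNext, Finset.mul_sum]
  refine Finset.sum_congr rfl fun xs _ => ?_
  rw [law_snoc]
  ring

lemma sum_jointNext {P : X → U → X → ℝ} (hP : ∀ x u, IsPmf (P x u))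
    (γe : (X → ℝ) → (X → M)) (γc : (X → ℝ) → ((X → M) → M → U))
    {π0 : X → ℝ} (hπ0 : IsPmf π0) {n : ℕ} (qs : Fin n → M) :
    ∑ x, jointNext P γe γc π0 n qs x = outProb P γe γc π0 n qs := by
  unfold jointNext outProb
  rw [Finset.sum_comm]
  refine Finset.sum_congr rfl fun xs _ => ?_
  rw [← Finset.mul_sum, stepF_sum hP hπ0, mul_one]

lemma outProb_snoc_sum {P : X → U → X → ℝ} (hP : ∀ x u, IsPmf (P x u))
    (γe : (X → ℝ) → (X → M)) (γc : (X → ℝ) → ((X → M) → M → U))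
    {π0 : X → ℝ} (hπ0 : IsPmf π0) {n : ℕ} (qs : Fin n → M) :
    ∑ q : M, outProb P γe γc π0 (n + 1) (Fin.snoc qs q) =
      outProb P γe γc π0 n qs := by
  rw [Finset.sum_congr rfl fun q _ => outProb_snoc P γe γc π0 qs q,
    Finset.sum_comm]
  rw [Finset.sum_congr rfl fun x _ => by
    rw [← Finset.sum_mul, sum_ind_one, one_mul]]
  exact sum_jointNext hP γe γc hπ0 qs

lemma cost_aux {P : X → U → X → ℝ} (hP : ∀ x u, IsPmf (P x u)) (c : X → U → ℝ)
    (γe : (X → ℝ) → (X → M)) (γc : (X → ℝ) → ((X → M) → M → U))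
    {π0 : X → ℝ} (hπ0 : IsPmf π0) :
    ∀ n : ℕ,
      (∑ xs : Fin n → X, ∑ qs : Fin n → M,
          law P γe γc π0 n xs qs *
            ∑ k : Fin n,
              c (xs k)
                (γc (predAt P γe γc π0 qs (k : ℕ)) (γe (predAt P γe γc π0 qs (k : ℕ)))
                  (qs k)))
        = ∑ qs : Fin n → M,
            outProb P γe γc π0 n qs *
              ∑ k : Fin n,
                ctilde c (predAt P γe γc π0 qs (k : ℕ))
                  (γe (predAt P γe γc π0 qs (k : ℕ)))
                  (γc (predAt P γe γc π0 qs (k : ℕ))) := by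
  intro n
  induction n with
  | zero => simp
  | succ n ih =>
    have hPnn : ∀ x u x', 0 ≤ P x u x' := fun x u => (hP x u).1
    have key := jointNext_eq hP γe γc hπ0 n
    -- cost sum splits over `Fin.snoc`
    have hcost : ∀ (xs : Fin n → X) (x : X) (qs : Fin n → M) (q : M),
        (∑ k : Fin (n + 1),
            c (Fin.snoc (α := fun _ => X) xs x k)
              (γc (predAt P γe γc π0 (Fin.snoc qs q) (k : ℕ))
                (γe (predAt P γe γc π0 (Fin.snoc qs q) (k : ℕ)))
                (Fin.snoc (α := fun _ => M) qs q k)))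
          = (∑ k : Fin n,
              c (xs k)
                (γc (predAt P γe γc π0 qs (k : ℕ)) (γe (predAt P γe γc π0 qs (k : ℕ)))
                  (qs k)))
            + c x (γc (predAt P γe γc π0 qs n) (γe (predAt P γe γc π0 qs n)) q) := by
      intro xs x qs q
      rw [Fin.sum_univ_castSucc]
      congr 1
      · refine Finset.sum_congr rfl fun k _ => ?_
        simp only [Fin.coe_castSucc, Fin.snoc_castSucc]
        rw [predAt_snoc P γe γc π0 qs q (le_of_lt k.isLt)]
      · simp only [Fin.val_last, Fin.snoc_last]
        rw [predAt_snoc P γe γc π0 qs q le_rfl]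
    -- Step 1: reindex LHS over snoc in the order (q, qs, x, xs)
    have step1 :
        (∑ xs : Fin (n + 1) → X, ∑ qs : Fin (n + 1) → M,
            law P γe γc π0 (n + 1) xs qs *
              ∑ k : Fin (n + 1),
                c (xs k)
                  (γc (predAt P γe γc π0 qs (k : ℕ)) (γe (predAt P γe γc π0 qs (k : ℕ)))
                    (qs k)))
          = ∑ q : M, ∑ qs : Fin n → M, ∑ x : X, ∑ xs : Fin n → X,
              law P γe γc π0 n xs qs *
                (stepF P γe γc π0 xs qs x *
                  (if q = γe (predAt P γe γc π0 qs n) x then 1 else 0)) *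
                ((∑ k : Fin n,
                    c (xs k)
                      (γc (predAt P γe γc π0 qs (k : ℕ))
                        (γe (predAt P γe γc π0 qs (k : ℕ))) (qs k)))
                  + c x (γc (predAt P γe γc π0 qs n) (γe (predAt P γe γc π0 qs n)) q)) := by
      rw [Finset.sum_comm, sum_snoc]
      refine Finset.sum_congr rfl fun q _ => ?_
      refine Finset.sum_congr rfl fun qs _ => ?_
      rw [sum_snoc]
      refine Finset.sum_congr rfl fun x _ => ?_
      refine Finset.sum_congr rfl fun xs _ => ?_
      rw [law_snoc, hcost]
    -- first piece equals the horizon-`n` LHS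
    have hT1 :
        (∑ q : M, ∑ qs : Fin n → M, ∑ x : X, ∑ xs : Fin n → X,
            law P γe γc π0 n xs qs *
              (stepF P γe γc π0 xs qs x *
                (if q = γe (predAt P γe γc π0 qs n) x then 1 else 0)) *
              (∑ k : Fin n,
                  c (xs k)
                    (γc (predAt P γe γc π0 qs (k : ℕ))
                      (γe (predAt P γe γc π0 qs (k : ℕ))) (qs k))))
          = ∑ xs : Fin n → X, ∑ qs : Fin n → M,
              law P γe γc π0 n xs qs *
                ∑ k : Fin n,
                  c (xs k)
                    (γc (predAt P γe γc π0 qs (k : ℕ))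
                      (γe (predAt P γe γc π0 qs (k : ℕ))) (qs k)) := by
      rw [Finset.sum_comm]
      have inner : ∀ qs : Fin n → M,
          (∑ q : M, ∑ x : X, ∑ xs : Fin n → X,
              law P γe γc π0 n xs qs *
                (stepF P γe γc π0 xs qs x *
                  (if q = γe (predAt P γe γc π0 qs n) x then 1 else 0)) *
                (∑ k : Fin n,
                    c (xs k)
                      (γc (predAt P γe γc π0 qs (k : ℕ))
                        (γe (predAt P γe γc π0 qs (k : ℕ))) (qs k))))
            = ∑ xs : Fin n → X,
                law P γe γc π0 n xs qs *
                  ∑ k : Fin n,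
                    c (xs k)
                      (γc (predAt P γe γc π0 qs (k : ℕ))
                        (γe (predAt P γe γc π0 qs (k : ℕ))) (qs k)) := by
        intro qs
        rw [Finset.sum_comm]
        have h1 : ∀ x : X,
            (∑ q : M, ∑ xs : Fin n → X,
                law P γe γc π0 n xs qs *
                  (stepF P γe γc π0 xs qs x *
                    (if q = γe (predAt P γe γc π0 qs n) x then 1 else 0)) *
                  (∑ k : Fin n,
                      c (xs k)
                        (γc (predAt P γe γc π0 qs (k : ℕ))
                          (γe (predAt P γe γc π0 qs (k : ℕ))) (qs k))))
              = ∑ xs : Fin n → X,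
                  law P γe γc π0 n xs qs * stepF P γe γc π0 xs qs x *
                    (∑ k : Fin n,
                        c (xs k)
                          (γc (predAt P γe γc π0 qs (k : ℕ))
                            (γe (predAt P γe γc π0 qs (k : ℕ))) (qs k))) := by
          intro x
          have h2 : ∀ q : M,
              (∑ xs : Fin n → X,
                  law P γe γc π0 n xs qs *
                    (stepF P γe γc π0 xs qs x *
                      (if q = γe (predAt P γe γc π0 qs n) x then 1 else 0)) *
                    (∑ k : Fin n,
                        c (xs k)
                          (γc (predAt P γe γc π0 qs (k : ℕ))
                            (γe (predAt P γe γc π0 qs (k : ℕ))) (qs k))))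
                = (if q = γe (predAt P γe γc π0 qs n) x then 1 else 0) *
                    ∑ xs : Fin n → X,
                      law P γe γc π0 n xs qs * stepF P γe γc π0 xs qs x *
                        (∑ k : Fin n,
                            c (xs k)
                              (γc (predAt P γe γc π0 qs (k : ℕ))
                                (γe (predAt P γe γc π0 qs (k : ℕ))) (qs k))) := by
            intro q
            rw [Finset.mul_sum]
            exact Finset.sum_congr rfl fun xs _ => by ring
          rw [Finset.sum_congr rfl fun q _ => h2 q, sum_ind_eval]
        rw [Finset.sum_congr rfl fun x _ => h1 x, Finset.sum_comm]
        refine Finset.sum_congr rfl fun xs _ => ?_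
        have : (∑ x : X,
            law P γe γc π0 n xs qs * stepF P γe γc π0 xs qs x *
              (∑ k : Fin n,
                  c (xs k)
                    (γc (predAt P γe γc π0 qs (k : ℕ))
                      (γe (predAt P γe γc π0 qs (k : ℕ))) (qs k))))
            = (∑ x : X, stepF P γe γc π0 xs qs x) *
                (law P γe γc π0 n xs qs *
                  ∑ k : Fin n,
                    c (xs k)
                      (γc (predAt P γe γc π0 qs (k : ℕ))
                        (γe (predAt P γe γc π0 qs (k : ℕ))) (qs k))) := by
          rw [Finset.sum_mul]
          exact Finset.sum_congr rfl fun x _ => by ring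
        rw [this, stepF_sum hP hπ0, one_mul]
      rw [Finset.sum_congr rfl fun qs _ => inner qs]
      exact Finset.sum_comm
    -- second piece equals the extra `ctilde` term
    have hT2 :
        (∑ q : M, ∑ qs : Fin n → M, ∑ x : X, ∑ xs : Fin n → X,
            law P γe γc π0 n xs qs *
              (stepF P γe γc π0 xs qs x *
                (if q = γe (predAt P γe γc π0 qs n) x then 1 else 0)) *
              c x (γc (predAt P γe γc π0 qs n) (γe (predAt P γe γc π0 qs n)) q))
          = ∑ qs : Fin n → M,
              outProb P γe γc π0 n qs *
                ctilde c (predAt P γe γc π0 qs n) (γe (predAt P γe γc π0 qs n))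
                  (γc (predAt P γe γc π0 qs n)) := by
      rw [Finset.sum_comm]
      refine Finset.sum_congr rfl fun qs _ => ?_
      rw [Finset.sum_comm]
      have h2 : ∀ (x : X) (q : M),
          (∑ xs : Fin n → X,
              law P γe γc π0 n xs qs *
                (stepF P γe γc π0 xs qs x *
                  (if q = γe (predAt P γe γc π0 qs n) x then 1 else 0)) *
                c x (γc (predAt P γe γc π0 qs n) (γe (predAt P γe γc π0 qs n)) q))
            = (if q = γe (predAt P γe γc π0 qs n) x then 1 else 0) *
                (c x (γc (predAt P γe γc π0 qs n) (γe (predAt P γe γc π0 qs n)) q) *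
                  jointNext P γe γc π0 n qs x) := by
        intro x q
        rw [jointNext, Finset.mul_sum, Finset.mul_sum]
        exact Finset.sum_congr rfl fun xs _ => by ring
      rw [Finset.sum_congr rfl fun x _ => by
        rw [Finset.sum_congr rfl fun q _ => h2 x q,
          sum_ind_eval (γe (predAt P γe γc π0 qs n) x)
            (fun q => c x (γc (predAt P γe γc π0 qs n)
              (γe (predAt P γe γc π0 qs n)) q) * jointNext P γe γc π0 n qs x),
          key qs x]]
      unfold ctilde
      rw [Finset.mul_sum]
      exact Finset.sum_congr rfl fun x _ => by ring
    -- reshape RHS over snoc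
    have hR :
        (∑ qs : Fin (n + 1) → M,
            outProb P γe γc π0 (n + 1) qs *
              ∑ k : Fin (n + 1),
                ctilde c (predAt P γe γc π0 qs (k : ℕ))
                  (γe (predAt P γe γc π0 qs (k : ℕ)))
                  (γc (predAt P γe γc π0 qs (k : ℕ))))
          = ∑ qs : Fin n → M,
              outProb P γe γc π0 n qs *
                ((∑ k : Fin n,
                    ctilde c (predAt P γe γc π0 qs (k : ℕ))
                      (γe (predAt P γe γc π0 qs (k : ℕ)))
                      (γc (predAt P γe γc π0 qs (k : ℕ))))
                  + ctilde c (predAt P γe γc π0 qs n) (γe (predAt P γe γc π0 qs n))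
                      (γc (predAt P γe γc π0 qs n))) := by
      rw [sum_snoc]
      have hS : ∀ (qs : Fin n → M) (q : M),
          (∑ k : Fin (n + 1),
              ctilde c (predAt P γe γc π0 (Fin.snoc qs q) (k : ℕ))
                (γe (predAt P γe γc π0 (Fin.snoc qs q) (k : ℕ)))
                (γc (predAt P γe γc π0 (Fin.snoc qs q) (k : ℕ))))
            = (∑ k : Fin n,
                ctilde c (predAt P γe γc π0 qs (k : ℕ))
                  (γe (predAt P γe γc π0 qs (k : ℕ)))
                  (γc (predAt P γe γc π0 qs (k : ℕ))))
              + ctilde c (predAt P γe γc π0 qs n) (γe (predAt P γe γc π0 qs n))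
                  (γc (predAt P γe γc π0 qs n)) := by
        intro qs q
        rw [Fin.sum_univ_castSucc]
        congr 1
        · refine Finset.sum_congr rfl fun k _ => ?_
          simp only [Fin.coe_castSucc]
          rw [predAt_snoc P γe γc π0 qs q (le_of_lt k.isLt)]
        · simp only [Fin.val_last]
          rw [predAt_snoc P γe γc π0 qs q le_rfl]
      rw [Finset.sum_congr rfl fun q _ => Finset.sum_congr rfl fun qs _ => by
        rw [hS qs q]]
      rw [Finset.sum_comm]
      refine Finset.sum_congr rfl fun qs _ => ?_
      rw [← Finset.sum_mul, outProb_snoc_sum hP γe γc hπ0 qs]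
    rw [step1, hR]
    simp only [mul_add, Finset.sum_add_distrib]
    rw [hT1, ih, hT2]

end Aux

/-- Cost equivalence for controlled-predictor policies: for every finite
horizon `N ≥ 1`, every initial pmf `π_0` and every controlled-predictor policy,
`E[Σ_{k=0}^{N-1} c(x_k, u_k)] = E[Σ_{k=0}^{N-1} c̃(π_k, Q_k, η_k)]`,
where `u_k = η_k(Q_k, q_k)`, expectations are w.r.t. the trajectory law, `π_k` is the
recursively defined predictor, and `c̃(π,Q,η) := Σ_x π(x) c(x, η(Q, Q(x)))`. -/
theorem cost_equivalence
    [Fintype X] [Fintype U] [Fintype M]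
    [Nonempty X] [Nonempty U] [Nonempty M] [DecidableEq X] [DecidableEq M]
    (P : X → U → X → ℝ) (hP : ∀ x u, IsPmf (P x u)) (c : X → U → ℝ)
    (γe : (X → ℝ) → (X → M)) (γc : (X → ℝ) → ((X → M) → M → U))
    (π0 : X → ℝ) (hπ0 : IsPmf π0)
    (N : ℕ) (hN : 1 ≤ N) :
    (∑ xs : Fin N → X, ∑ qs : Fin N → M,
        law P γe γc π0 N xs qs *
          ∑ k : Fin N,
            c (xs k)
              (γc (predAt P γe γc π0 qs (k : ℕ)) (γe (predAt P γe γc π0 qs (k : ℕ)))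
                (qs k)))
      = ∑ qs : Fin N → M,
          outProb P γe γc π0 N qs *
            ∑ k : Fin N,
              ctilde c (predAt P γe γc π0 qs (k : ℕ))
                (γe (predAt P γe γc π0 qs (k : ℕ)))
                (γc (predAt P γe γc π0 qs (k : ℕ))) := by
  exact cost_aux hP c γe γc hπ0 N

end
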